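/- Theorem 2.1(d). Fix t ∈ ℝ. Suppose x ∈ 𝓑_{ε1,ε2}, the separation condition σ(t) ≥ 2α/(φ'_k(t) − φ'_{k−1}(t)) holds for all t and k = 1,…,K, and 2M(t)(τ0 + λ_0(t)) ≤ μ(t). Let ε̃1 satisfy M(t)(τ0 + λ_0(t)) ≤ ε̃1 ≤ μ(t) − M(t)(τ0 + λ_0(t)); let η̂_0 = 0 and η̂_ℓ(t) = argmax_{η ∈ 𝓖_{t,ℓ}} |Ṽ_x(t,η)| for 1 ≤ ℓ ≤ K. If in addition g(τ) ≥ 0 for all τ ∈ ℝ, then for each ℓ = 0,1,…,K, | |Ṽ_x(t, η̂_ℓ)| − A_ℓ(t) | ≤ err_ℓ(t). -/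

import Mathlib

open MeasureTheory Real

noncomputable section

/-- The adaptive short-time Fourier transform with time-varying window width `σ`. -/
def aSTFT (x : ℝ → ℂ) (g : ℝ → ℝ) (σ : ℝ → ℝ) (t η : ℝ) : ℂ :=
  ∫ τ : ℝ, x (t + τ) * (((σ t)⁻¹ * g (τ / σ t) : ℝ) : ℂ) *
    Complex.exp (-(2 * (π : ℂ) * η * τ) * Complex.I)

/-- The Fourier transform `ĝ` of the window `g`. -/
def hatg (g : ℝ → ℝ) (ξ : ℝ) : ℂ :=
  ∫ τ : ℝ, (g τ : ℂ) * Complex.exp (-(2 * (π : ℂ) * ξ * τ) * Complex.I)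

/-- The absolute moments `I_n = ∫ |τ^n g(τ)| dτ` of the window. -/
def momentI (g : ℝ → ℝ) (n : ℕ) : ℝ := ∫ τ : ℝ, |τ| ^ n * |g τ|

/-- The `k`-th component `x_k(s) = A_k(s) e^{2πi φ_k(s)}`. -/
def xcomp (A φ : ℕ → ℝ → ℝ) (k : ℕ) (s : ℝ) : ℂ :=
  (A k s : ℂ) * Complex.exp ((2 * (π : ℂ) * φ k s) * Complex.I)

/-- `M(t) = Σ_{k=0}^K A_k(t)`. -/
def Msum (K : ℕ) (A : ℕ → ℝ → ℝ) (t : ℝ) : ℝ := ∑ k ∈ Finset.range (K + 1), A k t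

/-- `μ(t) = min_{0 ≤ k ≤ K} A_k(t)`. -/
def muMin (K : ℕ) (A : ℕ → ℝ → ℝ) (t : ℝ) : ℝ :=
  (Finset.range (K + 1)).inf' (by simp) fun k => A k t

/-- `λ_0(t) = ε1 I_1 σ(t) + π ε2 I_2 σ(t)²`. -/
def lam0 (g : ℝ → ℝ) (σ : ℝ → ℝ) (ε1 ε2 t : ℝ) : ℝ :=
  ε1 * momentI g 1 * σ t + π * ε2 * momentI g 2 * σ t ^ 2

/-- `err_ℓ(t) = M(t)λ_0(t) + Σ_{k≠ℓ} A_k(t) |ĝ(α(2|ℓ−k|−1))|`. -/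
def errl (K : ℕ) (A : ℕ → ℝ → ℝ) (g : ℝ → ℝ) (σ : ℝ → ℝ) (α ε1 ε2 : ℝ)
    (l : ℕ) (t : ℝ) : ℝ :=
  Msum K A t * lam0 g σ ε1 ε2 t +
    ∑ k ∈ (Finset.range (K + 1)).erase l,
      A k t * ‖hatg g (α * (2 * |(l : ℝ) - (k : ℝ)| - 1))‖

/-- `𝓖_t = {η : |Ṽ_x(t,η)| > ε̃1}`. -/
def Gt (x : ℝ → ℂ) (g : ℝ → ℝ) (σ : ℝ → ℝ) (t eps : ℝ) : Set ℝ :=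
  {η | eps < ‖aSTFT x g σ t η‖}

/-- `𝓖_{t,k} = {η ∈ 𝓖_t : |η − φ'_k(t)| < α/σ(t)}`. -/
def Gtk (x : ℝ → ℂ) (g : ℝ → ℝ) (σ : ℝ → ℝ) (φ : ℕ → ℝ → ℝ) (α t eps : ℝ)
    (k : ℕ) : Set ℝ :=
  {η | η ∈ Gt x g σ t eps ∧ |η - deriv (φ k) t| < α / σ t}

/-! ### Auxiliary lemmas -/

lemma norm_cexp_I_sub_one (θ : ℝ) : ‖Complex.exp ((θ:ℂ) * Complex.I) - 1‖ ≤ |θ| := by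
  have h1 : Complex.exp ((θ:ℂ) * Complex.I) - 1 =
      (((Real.cos θ - 1 : ℝ)) : ℂ) + ((Real.sin θ : ℝ) : ℂ) * Complex.I := by
    rw [Complex.exp_mul_I]
    push_cast
    ring
  have h2 : ‖Complex.exp ((θ:ℂ) * Complex.I) - 1‖ ^ 2 = 2 - 2 * Real.cos θ := by
    rw [h1, Complex.sq_norm, Complex.normSq_add_mul_I]
    nlinarith [Real.sin_sq_add_cos_sq θ]
  have h3 : ‖Complex.exp ((θ:ℂ) * Complex.I) - 1‖ ^ 2 ≤ |θ| ^ 2 := by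
    rw [h2, sq_abs]
    nlinarith [Real.one_sub_sq_div_two_le_cos (x := θ)]
  calc ‖Complex.exp ((θ:ℂ) * Complex.I) - 1‖
      = Real.sqrt (‖Complex.exp ((θ:ℂ) * Complex.I) - 1‖ ^ 2) := by
        rw [Real.sqrt_sq (norm_nonneg _)]
    _ ≤ Real.sqrt (|θ| ^ 2) := Real.sqrt_le_sqrt h3
    _ = |θ| := by rw [Real.sqrt_sq (abs_nonneg _)]

lemma norm_cexp_I_sub_cexp_I (a b : ℝ) :
    ‖Complex.exp ((a:ℂ) * Complex.I) - Complex.exp ((b:ℂ) * Complex.I)‖ ≤ |a - b| := by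
  calc ‖Complex.exp ((a:ℂ) * Complex.I) - Complex.exp ((b:ℂ) * Complex.I)‖
      = ‖Complex.exp ((b:ℂ) * Complex.I)‖ * ‖Complex.exp (((a - b : ℝ):ℂ) * Complex.I) - 1‖ := by
        rw [← norm_mul, mul_sub, mul_one, ← Complex.exp_add]
        push_cast; ring_nf
    _ ≤ |a - b| := by
        rw [Complex.norm_exp_ofReal_mul_I, one_mul]
        exact norm_cexp_I_sub_one _

/-- Second-order Taylor bound. -/
lemma taylor2 (f : ℝ → ℝ) (hf : ContDiff ℝ 2 f) (ε2 : ℝ) (hε : 0 ≤ ε2)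
    (hb : ∀ s, |deriv (deriv f) s| ≤ ε2) (t τ : ℝ) :
    |f (t + τ) - f t - deriv f t * τ| ≤ ε2 * τ ^ 2 / 2 := by
  have hf1 : Differentiable ℝ f := hf.differentiable (by norm_num)
  have hf2 : Differentiable ℝ (deriv f) := (hf.iterate_deriv' 1 1).differentiable (by norm_num)
  have hlip : LipschitzWith (Real.toNNReal ε2) (deriv f) := by
    apply lipschitzWith_of_nnnorm_deriv_le hf2
    intro x
    rw [← NNReal.coe_le_coe, coe_nnnorm, Real.coe_toNNReal _ hε]
    exact hb x
  have hder : ∀ u, |deriv f (t + u) - deriv f t| ≤ ε2 * |u| := by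
    intro u
    have := hlip.dist_le_mul (t + u) t
    rw [Real.dist_eq, Real.dist_eq, Real.coe_toNNReal _ hε] at this
    simpa [abs_sub_comm] using this
  have hcont : Continuous (deriv f) := hf2.continuous
  have hci : Continuous fun u : ℝ => deriv f (t + u) := hcont.comp (by continuity)
  have hftc : f (t + τ) - f t = ∫ u in (0:ℝ)..τ, deriv f (t + u) := by
    have hd : ∀ u ∈ Set.uIcc (0:ℝ) τ, HasDerivAt (fun u => f (t + u)) (deriv f (t + u)) u := by
      intro u _
      have h := (hf1.differentiableAt.hasDerivAt (x := t + u)).comp u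
        ((hasDerivAt_id u).const_add t)
      rw [mul_one] at h
      exact h
    rw [intervalIntegral.integral_eq_sub_of_hasDerivAt hd (hci.intervalIntegrable _ _)]
    simp
  have hlin : deriv f t * τ = ∫ u in (0:ℝ)..τ, deriv f t := by simp [mul_comm]
  have hsub : f (t + τ) - f t - deriv f t * τ
      = ∫ u in (0:ℝ)..τ, (deriv f (t + u) - deriv f t) := by
    rw [intervalIntegral.integral_sub (hci.intervalIntegrable _ _) intervalIntegrable_const,
      ← hftc, ← hlin]
  have habs : |∫ u in (0:ℝ)..τ, ε2 * abs u| = ε2 * τ ^ 2 / 2 := by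
    rcases le_or_gt 0 τ with hτ | hτ
    · have h1 : ∫ u in (0:ℝ)..τ, ε2 * |u| = ∫ u in (0:ℝ)..τ, ε2 * u := by
        apply intervalIntegral.integral_congr
        intro u hu
        rw [Set.uIcc_of_le hτ] at hu
        show ε2 * |u| = ε2 * u
        rw [abs_of_nonneg hu.1]
      rw [h1, intervalIntegral.integral_const_mul, integral_id]
      rw [abs_of_nonneg (by nlinarith [sq_nonneg τ])]
      ring
    · have h1 : ∫ u in (0:ℝ)..τ, ε2 * |u| = ∫ u in (0:ℝ)..τ, ε2 * (-u) := by
        apply intervalIntegral.integral_congr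
        intro u hu
        rw [Set.uIcc_of_ge hτ.le] at hu
        show ε2 * |u| = ε2 * -u
        rw [abs_of_nonpos hu.2]
      have h2 : ∫ u in (0:ℝ)..τ, ε2 * (-u) = -(ε2 * (τ^2/2)) := by
        have : (fun u : ℝ => ε2 * (-u)) = fun u : ℝ => (-ε2) * u := by funext u; ring
        rw [this, intervalIntegral.integral_const_mul, integral_id]
        ring
      rw [h1, h2, abs_neg, abs_of_nonneg (by nlinarith [sq_nonneg τ])]
      ring
  rw [hsub, ← habs, ← Real.norm_eq_abs (∫ u in (0:ℝ)..τ, (deriv f (t + u) - deriv f t))]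
  apply intervalIntegral.norm_integral_le_abs_of_norm_le (g := fun u => ε2 * abs u)
  · filter_upwards with u
    simpa using hder u
  · exact (continuous_const.mul continuous_abs).intervalIntegrable _ _
lemma hatg_zero (g : ℝ → ℝ) (hgnorm : (∫ τ : ℝ, g τ) = 1) : hatg g 0 = 1 := by
  unfold hatg
  simp only [Complex.ofReal_zero, mul_zero, zero_mul, neg_zero, Complex.exp_zero, mul_one]
  have := integral_ofReal (𝕜 := ℂ) (f := g) (μ := (volume : Measure ℝ))
  norm_num at this
  rw [this, hgnorm, Complex.ofReal_one]

lemma hatg_norm_anti (g : ℝ → ℝ)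
    (hgeven : ∀ ξ, ‖hatg g (-ξ)‖ = ‖hatg g ξ‖)
    (hgdec : ∀ ξ1 ξ2, 0 ≤ ξ1 → ξ1 ≤ ξ2 → ‖hatg g ξ2‖ ≤ ‖hatg g ξ1‖)
    {c ξ : ℝ} (hc : 0 ≤ c) (hcξ : c ≤ |ξ|) : ‖hatg g ξ‖ ≤ ‖hatg g c‖ := by
  have habs : ‖hatg g ξ‖ = ‖hatg g |ξ|‖ := by
    rcases le_or_gt 0 ξ with h | h
    · rw [abs_of_nonneg h]
    · rw [abs_of_neg h, ← hgeven ξ]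
  rw [habs]
  exact hgdec c |ξ| hc hcξ

lemma hatg_norm_le_one (g : ℝ → ℝ) (hgnorm : (∫ τ : ℝ, g τ) = 1)
    (hgeven : ∀ ξ, ‖hatg g (-ξ)‖ = ‖hatg g ξ‖)
    (hgdec : ∀ ξ1 ξ2, 0 ≤ ξ1 → ξ1 ≤ ξ2 → ‖hatg g ξ2‖ ≤ ‖hatg g ξ1‖)
    (ξ : ℝ) : ‖hatg g ξ‖ ≤ 1 := by
  have := hatg_norm_anti g hgeven hgdec (le_refl 0) (abs_nonneg ξ)
  rwa [hatg_zero g hgnorm, norm_one] at this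

/-- The scaled window has Fourier transform `ĝ(σξ)`. -/
lemma hatg_scaled (g : ℝ → ℝ) {σ0 : ℝ} (hσ : 0 < σ0) (ξ : ℝ) :
    (∫ τ : ℝ, ((σ0⁻¹ * g (τ / σ0) : ℝ) : ℂ) *
      Complex.exp (-(2 * (π : ℂ) * ξ * τ) * Complex.I)) = hatg g (σ0 * ξ) := by
  have hne : σ0 ≠ 0 := hσ.ne'
  set F : ℝ → ℂ := fun u => (g u : ℂ) * Complex.exp (-(2 * (π : ℂ) * (σ0 * ξ) * u) * Complex.I)
    with hF
  have hpt : ∀ τ : ℝ, ((σ0⁻¹ * g (τ / σ0) : ℝ) : ℂ) *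
      Complex.exp (-(2 * (π : ℂ) * ξ * τ) * Complex.I) = (σ0⁻¹ : ℝ) • F (τ / σ0) := by
    intro τ
    have hc : (σ0:ℂ) ≠ 0 := by exact_mod_cast hne
    have hexp : Complex.exp (-(2 * (π : ℂ) * ((σ0 * ξ : ℝ):ℂ) * ((τ / σ0 : ℝ):ℂ)) * Complex.I)
        = Complex.exp (-(2 * (π : ℂ) * ξ * τ) * Complex.I) := by
      congr 1
      push_cast
      field_simp
    rw [hF]
    simp only [Complex.real_smul]
    push_cast [hexp]
    push_cast at hexp
    rw [hexp]
    ring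
  calc (∫ τ : ℝ, ((σ0⁻¹ * g (τ / σ0) : ℝ) : ℂ) *
        Complex.exp (-(2 * (π : ℂ) * ξ * τ) * Complex.I))
      = ∫ τ : ℝ, (σ0⁻¹ : ℝ) • F (τ / σ0) := by
        exact integral_congr_ae (Filter.Eventually.of_forall hpt)
    _ = (σ0⁻¹ : ℝ) • ∫ τ : ℝ, F (τ / σ0) := integral_smul _ _
    _ = (σ0⁻¹ : ℝ) • (|σ0| • ∫ u, F u) := by rw [MeasureTheory.Measure.integral_comp_div F σ0]
    _ = hatg g (σ0 * ξ) := by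
        rw [abs_of_pos hσ, smul_smul, inv_mul_cancel₀ hne, one_smul]
        rw [hF]
        unfold hatg
        refine integral_congr_ae (Filter.Eventually.of_forall fun u => ?_)
        congr 2
        push_cast
        ring

/-- Scaling of absolute moments. -/
lemma moment_scaled (g : ℝ → ℝ) {σ0 : ℝ} (hσ : 0 < σ0) (n : ℕ) :
    (∫ τ : ℝ, σ0⁻¹ * (|τ| ^ n * |g (τ / σ0)|)) = σ0 ^ n * momentI g n := by
  have hne : σ0 ≠ 0 := hσ.ne'
  set H : ℝ → ℝ := fun u => σ0⁻¹ * (|σ0 * u| ^ n * |g u|) with hH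
  have hpt : ∀ τ : ℝ, σ0⁻¹ * (|τ| ^ n * |g (τ / σ0)|) = H (τ / σ0) := by
    intro τ
    rw [hH]
    simp only
    rw [mul_div_cancel₀ _ hne]
  calc (∫ τ : ℝ, σ0⁻¹ * (|τ| ^ n * |g (τ / σ0)|))
      = ∫ τ : ℝ, H (τ / σ0) := by
        exact integral_congr_ae (Filter.Eventually.of_forall hpt)
    _ = |σ0| • ∫ u, H u := MeasureTheory.Measure.integral_comp_div H σ0
    _ = σ0 ^ n * momentI g n := by
        rw [abs_of_pos hσ, hH]
        have : ∀ u : ℝ, σ0⁻¹ * (|σ0 * u| ^ n * |g u|)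
            = (σ0⁻¹ * σ0 ^ n) * (|u| ^ n * |g u|) := by
          intro u
          rw [abs_mul, abs_of_pos hσ, mul_pow]
          ring
        simp only [this]
        rw [integral_const_mul]
        unfold momentI
        rw [smul_eq_mul]
        field_simp
-- norm of the phase factors
lemma norm_exp_phase (r : ℝ) : ‖Complex.exp ((r:ℂ) * Complex.I)‖ = 1 := by
  rw [Complex.norm_exp]
  simp

lemma phase1 (p : ℝ) : Complex.exp ((2 * (π:ℂ) * (p:ℝ)) * Complex.I)
    = Complex.exp (((2 * π * p : ℝ):ℂ) * Complex.I) := by push_cast; ring_nf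

lemma phase2 (η τ : ℝ) : Complex.exp (-(2 * (π:ℂ) * (η:ℝ) * (τ:ℝ)) * Complex.I)
    = Complex.exp (((-(2 * π * η * τ) : ℝ):ℂ) * Complex.I) := by push_cast; ring_nf


lemma window_abs_integrable (g : ℝ → ℝ) (hgint : Integrable g) {σ0 : ℝ} (hσ0 : 0 < σ0) :
    Integrable (fun τ : ℝ => σ0⁻¹ * |g (τ / σ0)|) :=
  ((hgint.abs.comp_div hσ0.ne').const_mul _)

lemma comp_integrable (A1 φ1 : ℝ → ℝ) (hA1 : Continuous A1) (hφ1 : Continuous φ1)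
    {C : ℝ} (hAb : ∀ s, |A1 s| ≤ C)
    (g : ℝ → ℝ) (hgint : Integrable g) {σ0 : ℝ} (hσ0 : 0 < σ0) (t η : ℝ) :
    Integrable (fun τ : ℝ => ((A1 (t+τ) : ℂ) * Complex.exp ((2*(π:ℂ)*(φ1 (t+τ)))*Complex.I))
      * ((σ0⁻¹ * g (τ/σ0) : ℝ):ℂ) * Complex.exp (-(2*(π:ℂ)*η*τ)*Complex.I)) := by
  have hwm : AEStronglyMeasurable (fun τ : ℝ => ((σ0⁻¹ * g (τ/σ0) : ℝ):ℂ)) volume := by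
    exact Complex.continuous_ofReal.comp_aestronglyMeasurable
      (((hgint.comp_div hσ0.ne').aestronglyMeasurable).const_mul _)
  have hc1 : Continuous (fun τ : ℝ => ((A1 (t+τ) : ℂ) *
      Complex.exp ((2*(π:ℂ)*(φ1 (t+τ)))*Complex.I))) := by
    apply Continuous.mul
    · exact Complex.continuous_ofReal.comp (hA1.comp (continuous_const.add continuous_id))
    · apply Complex.continuous_exp.comp
      exact (continuous_const.mul (Complex.continuous_ofReal.comp
          (hφ1.comp (continuous_const.add continuous_id)))).mul continuous_const
  have hc2 : Continuous (fun τ : ℝ => Complex.exp (-(2*(π:ℂ)*η*τ)*Complex.I)) := by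
    apply Complex.continuous_exp.comp
    exact ((continuous_const.mul Complex.continuous_ofReal).neg).mul continuous_const
  apply Integrable.mono' (((window_abs_integrable g hgint hσ0).const_mul C))
  · exact (hc1.aestronglyMeasurable.mul hwm).mul hc2.aestronglyMeasurable
  · filter_upwards with τ
    have h1 : ‖((A1 (t+τ) : ℂ) * Complex.exp ((2*(π:ℂ)*(φ1 (t+τ)))*Complex.I))
        * ((σ0⁻¹ * g (τ/σ0) : ℝ):ℂ) * Complex.exp (-(2*(π:ℂ)*η*τ)*Complex.I)‖
        = |A1 (t+τ)| * (σ0⁻¹ * |g (τ/σ0)|) := by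
      rw [norm_mul, norm_mul, norm_mul, phase1, phase2, norm_exp_phase, norm_exp_phase,
        Complex.norm_real, Complex.norm_real, Real.norm_eq_abs, Real.norm_eq_abs,
        abs_mul, abs_of_pos (inv_pos.mpr hσ0)]
      ring
    rw [h1]
    have := hAb (t + τ)
    have h2 : 0 ≤ σ0⁻¹ * |g (τ/σ0)| := by positivity
    nlinarith [abs_nonneg (A1 (t+τ))]

/-- Main single-component estimate. -/
lemma comp_est (A1 φ1 : ℝ → ℝ) {ε1 ε2 : ℝ} (hε2 : 0 ≤ ε2)
    (hA1 : Continuous A1) {C : ℝ} (hAb : ∀ s, |A1 s| ≤ C)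
    (hφ1 : ContDiff ℝ 2 φ1)
    (hAlip : ∀ s τ, |A1 (s + τ) - A1 s| ≤ ε1 * |τ| * A1 s)
    (hApos : ∀ s, 0 < A1 s)
    (hφ'' : ∀ s, |deriv (deriv φ1) s| ≤ ε2)
    (g : ℝ → ℝ) (hgint : Integrable g)
    (hgI1 : Integrable fun τ : ℝ => τ * g τ) (hgI2 : Integrable fun τ : ℝ => τ ^ 2 * g τ)
    {σ0 : ℝ} (hσ0 : 0 < σ0) (t η : ℝ) :
    ‖(∫ τ : ℝ, ((A1 (t + τ) : ℂ) * Complex.exp ((2 * (π:ℂ) * (φ1 (t + τ))) * Complex.I))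
        * ((σ0⁻¹ * g (τ / σ0) : ℝ) : ℂ) * Complex.exp (-(2 * (π:ℂ) * η * τ) * Complex.I))
      - (A1 t : ℂ) * Complex.exp ((2 * (π:ℂ) * (φ1 t)) * Complex.I)
          * hatg g (σ0 * (η - deriv φ1 t))‖
    ≤ A1 t * (ε1 * momentI g 1 * σ0 + π * ε2 * momentI g 2 * σ0 ^ 2) := by
  set dφ := deriv φ1 t with hdφ
  set φtld : ℝ → ℝ := fun s => φ1 t + dφ * (s - t) with hφtld
  set w : ℝ → ℂ := fun τ => ((σ0⁻¹ * g (τ / σ0) : ℝ) : ℂ) with hw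
  set e : ℝ → ℂ := fun τ => Complex.exp (-(2 * (π:ℂ) * η * τ) * Complex.I) with he
  have hf_int : Integrable (fun τ : ℝ =>
      ((A1 (t + τ) : ℂ) * Complex.exp ((2 * (π:ℂ) * (φ1 (t + τ))) * Complex.I)) * w τ * e τ) :=
    comp_integrable A1 φ1 hA1 hφ1.continuous hAb g hgint hσ0 t η
  have hm_int : Integrable (fun τ : ℝ =>
      (((fun _ : ℝ => A1 t) (t + τ) : ℂ) *
        Complex.exp ((2 * (π:ℂ) * (φtld (t + τ))) * Complex.I)) * w τ * e τ) :=
    comp_integrable (fun _ => A1 t) φtld continuous_const (by fun_prop)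
      (fun _ => le_refl |A1 t|) g hgint hσ0 t η
  -- value of the model integral
  have hm_val : (∫ τ : ℝ, (((fun _ : ℝ => A1 t) (t + τ) : ℂ) *
        Complex.exp ((2 * (π:ℂ) * (φtld (t + τ))) * Complex.I)) * w τ * e τ)
      = (A1 t : ℂ) * Complex.exp ((2 * (π:ℂ) * (φ1 t)) * Complex.I)
          * hatg g (σ0 * (η - dφ)) := by
    have hpt : ∀ τ : ℝ, (((fun _ : ℝ => A1 t) (t + τ) : ℂ) *
        Complex.exp ((2 * (π:ℂ) * (φtld (t + τ))) * Complex.I)) * w τ * e τ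
        = ((A1 t : ℂ) * Complex.exp ((2 * (π:ℂ) * (φ1 t)) * Complex.I)) •
          (((σ0⁻¹ * g (τ / σ0) : ℝ) : ℂ) *
            Complex.exp (-(2 * (π:ℂ) * ((η - dφ : ℝ) : ℂ)) * τ * Complex.I)) := by
      intro τ
      rw [hφtld, hw, he]
      simp only [smul_eq_mul]
      have harg : φ1 t + dφ * (t + τ - t) = φ1 t + dφ * τ := by ring
      rw [harg]
      rw [show ((2 * (π:ℂ) * ((φ1 t + dφ * τ : ℝ) : ℂ)) * Complex.I)
          = ((2 * (π:ℂ) * ((φ1 t : ℝ) : ℂ)) * Complex.I)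
            + ((2 * (π:ℂ) * ((dφ * τ : ℝ) : ℂ)) * Complex.I) by push_cast; ring,
        Complex.exp_add]
      rw [show (-(2 * (π:ℂ) * ((η - dφ : ℝ) : ℂ)) * τ * Complex.I)
          = (-(2 * (π:ℂ) * (η : ℂ) * (τ:ℂ)) * Complex.I)
            + ((2 * (π:ℂ) * ((dφ * τ : ℝ) : ℂ)) * Complex.I) by push_cast; ring,
        Complex.exp_add]
      push_cast
      ring
    rw [integral_congr_ae (Filter.Eventually.of_forall hpt), integral_smul]
    rw [smul_eq_mul]
    congr 1
    have := hatg_scaled g hσ0 (η - dφ)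
    rw [← this]
    refine integral_congr_ae (Filter.Eventually.of_forall fun τ => ?_)
    congr 2
    push_cast
    ring
  -- pointwise bound on the difference
  have hptb : ∀ τ : ℝ, ‖(((A1 (t + τ) : ℂ) *
        Complex.exp ((2 * (π:ℂ) * (φ1 (t + τ))) * Complex.I)) * w τ * e τ)
      - ((((fun _ : ℝ => A1 t) (t + τ) : ℂ) *
        Complex.exp ((2 * (π:ℂ) * (φtld (t + τ))) * Complex.I)) * w τ * e τ)‖
      ≤ (A1 t * (ε1 * |τ| + π * ε2 * τ ^ 2)) * (σ0⁻¹ * |g (τ / σ0)|) := by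
    intro τ
    have hfac : (((A1 (t + τ) : ℂ) *
        Complex.exp ((2 * (π:ℂ) * (φ1 (t + τ))) * Complex.I)) * w τ * e τ)
      - ((((fun _ : ℝ => A1 t) (t + τ) : ℂ) *
        Complex.exp ((2 * (π:ℂ) * (φtld (t + τ))) * Complex.I)) * w τ * e τ)
      = (((A1 (t + τ) : ℂ) * Complex.exp ((2 * (π:ℂ) * (φ1 (t + τ))) * Complex.I))
        - ((A1 t : ℂ) * Complex.exp ((2 * (π:ℂ) * (φtld (t + τ))) * Complex.I))) * w τ * e τ := by
      ring
    rw [hfac, norm_mul, norm_mul]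
    have hwn : ‖w τ‖ = σ0⁻¹ * |g (τ / σ0)| := by
      rw [hw, Complex.norm_real, Real.norm_eq_abs, abs_mul, abs_of_pos (inv_pos.mpr hσ0)]
    have hen : ‖e τ‖ = 1 := by
      simp only [he]
      rw [phase2]; exact norm_exp_phase _
    rw [hwn, hen, mul_one]
    have hD : ‖((A1 (t + τ) : ℂ) * Complex.exp ((2 * (π:ℂ) * (φ1 (t + τ))) * Complex.I))
        - ((A1 t : ℂ) * Complex.exp ((2 * (π:ℂ) * (φtld (t + τ))) * Complex.I))‖
        ≤ A1 t * (ε1 * |τ| + π * ε2 * τ ^ 2) := by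
      have hsplit : ((A1 (t + τ) : ℂ) * Complex.exp ((2 * (π:ℂ) * (φ1 (t + τ))) * Complex.I))
          - ((A1 t : ℂ) * Complex.exp ((2 * (π:ℂ) * (φtld (t + τ))) * Complex.I))
          = ((A1 (t + τ) - A1 t : ℝ) : ℂ) *
              Complex.exp ((2 * (π:ℂ) * (φ1 (t + τ))) * Complex.I)
            + (A1 t : ℂ) * (Complex.exp ((2 * (π:ℂ) * (φ1 (t + τ))) * Complex.I)
              - Complex.exp ((2 * (π:ℂ) * (φtld (t + τ))) * Complex.I)) := by
        push_cast; ring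
      rw [hsplit]
      refine (norm_add_le _ _).trans ?_
      rw [norm_mul, norm_mul, phase1, phase1, norm_exp_phase, mul_one,
        Complex.norm_real, Real.norm_eq_abs, Complex.norm_real, Real.norm_eq_abs,
        abs_of_pos (hApos t)]
      have h1 : |A1 (t + τ) - A1 t| ≤ ε1 * |τ| * A1 t := hAlip t τ
      have h2 : ‖Complex.exp (((2 * π * φ1 (t + τ) : ℝ):ℂ) * Complex.I)
          - Complex.exp (((2 * π * φtld (t + τ) : ℝ):ℂ) * Complex.I)‖
          ≤ |2 * π * φ1 (t + τ) - 2 * π * φtld (t + τ)| := norm_cexp_I_sub_cexp_I _ _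
      have h3 : |2 * π * φ1 (t + τ) - 2 * π * φtld (t + τ)| ≤ 2 * π * (ε2 * τ ^ 2 / 2) := by
        have ht2 : |φ1 (t + τ) - φ1 t - dφ * τ| ≤ ε2 * τ ^ 2 / 2 :=
          taylor2 φ1 hφ1 ε2 hε2 hφ'' t τ
        have harg : φtld (t + τ) = φ1 t + dφ * τ := by rw [hφtld]; ring_nf
        rw [harg]
        have : 2 * π * φ1 (t + τ) - 2 * π * (φ1 t + dφ * τ)
            = 2 * π * (φ1 (t + τ) - φ1 t - dφ * τ) := by ring
        rw [this, abs_mul, abs_of_pos (by positivity : (0:ℝ) < 2 * π)]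
        exact mul_le_mul_of_nonneg_left ht2 (by positivity)
      have h4 := h2.trans h3
      nlinarith [(hApos t), abs_nonneg τ, sq_nonneg τ, Real.pi_pos]
    have hwn_pos : 0 ≤ σ0⁻¹ * |g (τ / σ0)| := by positivity
    exact mul_le_mul_of_nonneg_right hD hwn_pos
  -- the dominating function is integrable with the right integral
  have hq1 : Integrable (fun τ : ℝ => σ0⁻¹ * (|τ| ^ 1 * |g (τ / σ0)|)) := by
    refine (((hgI1.abs).comp_div hσ0.ne').const_mul (σ0⁻¹ * σ0)).congr
      (Filter.Eventually.of_forall fun τ => ?_)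
    simp only
    rw [abs_mul, abs_div, abs_of_pos hσ0]
    field_simp
  have hq2 : Integrable (fun τ : ℝ => σ0⁻¹ * (|τ| ^ 2 * |g (τ / σ0)|)) := by
    refine (((hgI2.abs).comp_div hσ0.ne').const_mul (σ0⁻¹ * σ0 ^ 2)).congr
      (Filter.Eventually.of_forall fun τ => ?_)
    simp only
    rw [abs_mul, abs_pow, abs_div, abs_of_pos hσ0]
    rw [div_pow]
    field_simp
  have hdom_int : Integrable (fun τ : ℝ =>
      (A1 t * (ε1 * |τ| + π * ε2 * τ ^ 2)) * (σ0⁻¹ * |g (τ / σ0)|)) := by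
    refine (((hq1.const_mul (A1 t * ε1)).add (hq2.const_mul (A1 t * (π * ε2)))).congr
      (Filter.Eventually.of_forall fun τ => ?_))
    simp only [Pi.add_apply]
    rw [sq_abs]
    ring
  have hdom_val : (∫ τ : ℝ, (A1 t * (ε1 * |τ| + π * ε2 * τ ^ 2)) * (σ0⁻¹ * |g (τ / σ0)|))
      = A1 t * (ε1 * momentI g 1 * σ0 + π * ε2 * momentI g 2 * σ0 ^ 2) := by
    have hsplit : ∀ τ : ℝ, (A1 t * (ε1 * |τ| + π * ε2 * τ ^ 2)) * (σ0⁻¹ * |g (τ / σ0)|)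
        = (A1 t * ε1) * (σ0⁻¹ * (|τ| ^ 1 * |g (τ / σ0)|))
          + (A1 t * (π * ε2)) * (σ0⁻¹ * (|τ| ^ 2 * |g (τ / σ0)|)) := by
      intro τ
      rw [sq_abs]
      ring
    have m1 : (∫ τ : ℝ, |τ| ^ 1 * |g (τ / σ0)|) = σ0 ^ 2 * momentI g 1 := by
      have h := moment_scaled g hσ0 1
      rw [integral_const_mul] at h
      have : (∫ τ : ℝ, |τ| ^ 1 * |g (τ / σ0)|) = σ0 * (σ0 ^ 1 * momentI g 1) := by
        rw [← h]; field_simp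
      rw [this]; ring
    have m2 : (∫ τ : ℝ, |τ| ^ 2 * |g (τ / σ0)|) = σ0 ^ 3 * momentI g 2 := by
      have h := moment_scaled g hσ0 2
      rw [integral_const_mul] at h
      have : (∫ τ : ℝ, |τ| ^ 2 * |g (τ / σ0)|) = σ0 * (σ0 ^ 2 * momentI g 2) := by
        rw [← h]; field_simp
      rw [this]; ring
    rw [integral_congr_ae (Filter.Eventually.of_forall hsplit),
      integral_add (hq1.const_mul _) (hq2.const_mul _),
      integral_const_mul, integral_const_mul, integral_const_mul, integral_const_mul, m1, m2]
    field_simp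
  rw [← hm_val, ← integral_sub hf_int hm_int]
  calc ‖∫ τ : ℝ, ((((A1 (t + τ) : ℂ) *
        Complex.exp ((2 * (π:ℂ) * (φ1 (t + τ))) * Complex.I)) * w τ * e τ)
      - ((((fun _ : ℝ => A1 t) (t + τ) : ℂ) *
        Complex.exp ((2 * (π:ℂ) * (φtld (t + τ))) * Complex.I)) * w τ * e τ))‖
      ≤ ∫ τ : ℝ, (A1 t * (ε1 * |τ| + π * ε2 * τ ^ 2)) * (σ0⁻¹ * |g (τ / σ0)|) :=
        norm_integral_le_of_norm_le hdom_int (Filter.Eventually.of_forall hptb)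
    _ = A1 t * (ε1 * momentI g 1 * σ0 + π * ε2 * momentI g 2 * σ0 ^ 2) := hdom_val

set_option maxHeartbeats 1000000 in
theorem thm2_1d (K : ℕ) (A φ : ℕ → ℝ → ℝ) (ε1 ε2 : ℝ) (x : ℝ → ℂ)
    (g : ℝ → ℝ) (σ : ℝ → ℝ) (τ0 α t epst : ℝ)
    (hε1 : 0 < ε1) (hε2 : 0 < ε2)
    (hAreg : ∀ k ≤ K, ContDiff ℝ 1 (A k))
    (hAbdd : ∀ k ≤ K, ∃ C, ∀ s, |A k s| ≤ C)
    (hφreg : ∀ k ≤ K, ContDiff ℝ 2 (φ k))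
    (hφ0 : ∀ s, φ 0 s = 0)
    (hApos : ∀ k ≤ K, ∀ s, 0 < A k s)
    (hφ'pos : ∀ k, 1 ≤ k → k ≤ K → ∃ c > 0, ∀ s, c ≤ deriv (φ k) s)
    (hφ'bdd : ∀ k, 1 ≤ k → k ≤ K → ∃ C, ∀ s, deriv (φ k) s ≤ C)
    (hfreq : ∃ d > 0, ∀ k, 2 ≤ k → k ≤ K → ∀ s, d ≤ deriv (φ k) s - deriv (φ (k - 1)) s)
    (hAlip : ∀ k ≤ K, ∀ s τ, |A k (s + τ) - A k s| ≤ ε1 * |τ| * A k s)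
    (hφ'' : ∀ k, 1 ≤ k → k ≤ K → ∀ s, |deriv (deriv (φ k)) s| ≤ ε2)
    (hx : ∀ s, x s = ∑ k ∈ Finset.range (K + 1), xcomp A φ k s)
    (hgint : Integrable g)
    (hgL2 : MemLp g 2 (volume : Measure ℝ))
    (hgI1 : Integrable fun τ : ℝ => τ * g τ)
    (hgI2 : Integrable fun τ : ℝ => τ ^ 2 * g τ)
    (hgnorm : (∫ τ : ℝ, g τ) = 1)
    (hgeven : ∀ ξ, ‖hatg g (-ξ)‖ = ‖hatg g ξ‖)
    (hgdec : ∀ ξ1 ξ2, 0 ≤ ξ1 → ξ1 ≤ ξ2 → ‖hatg g ξ2‖ ≤ ‖hatg g ξ1‖)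
    (hτ0 : 0 < τ0) (hτ0' : τ0 < 1)
    (hα : 0 < α) (hgα : ‖hatg g α‖ = τ0)
    (hσ : ∀ s, 0 < σ s)
    (hsep : ∀ s, ∀ k, 1 ≤ k → k ≤ K →
      2 * α / (deriv (φ k) s - deriv (φ (k - 1)) s) ≤ σ s)
    (hmain : 2 * Msum K A t * (τ0 + lam0 g σ ε1 ε2 t) ≤ muMin K A t)
    (heps1 : Msum K A t * (τ0 + lam0 g σ ε1 ε2 t) ≤ epst)
    (heps2 : epst ≤ muMin K A t - Msum K A t * (τ0 + lam0 g σ ε1 ε2 t))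
    (ηhat : ℕ → ℝ)
    (hηmem : ∀ l, 1 ≤ l → l ≤ K → ηhat l ∈ Gtk x g σ φ α t epst l)
    (hηmax : ∀ l, 1 ≤ l → l ≤ K → ∀ η ∈ Gtk x g σ φ α t epst l,
      ‖aSTFT x g σ t η‖ ≤ ‖aSTFT x g σ t (ηhat l)‖)
    (hη0 : ηhat 0 = 0)
    (hgpos : ∀ τ : ℝ, 0 ≤ g τ)
    :
    ∀ l ≤ K, |‖aSTFT x g σ t (ηhat l)‖ - A l t| ≤ errl K A g σ α ε1 ε2 l t := by
  intro l hl
  have hσt : 0 < σ t := hσ t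
  have hlmem : l ∈ Finset.range (K + 1) := Finset.mem_range.mpr (by omega)
  have hφ0fun : φ 0 = fun _ : ℝ => (0:ℝ) := funext hφ0
  have dφ0 : deriv (φ 0) = fun _ => (0:ℝ) := by rw [hφ0fun]; funext s; simp
  -- second derivative bound for all k (including k = 0)
  have hdd : ∀ k ≤ K, ∀ s, |deriv (deriv (φ k)) s| ≤ ε2 := by
    intro k hk s
    rcases Nat.eq_zero_or_pos k with rfl | hk1
    · rw [dφ0]
      simp [hε2.le]
    · exact hφ'' k hk1 hk s
  -- integrability of each component integrand
  have hint : ∀ k, k ≤ K → ∀ η : ℝ, Integrable (fun τ : ℝ =>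
      ((A k (t + τ) : ℂ) * Complex.exp ((2 * (π:ℂ) * (φ k (t + τ))) * Complex.I))
        * (((σ t)⁻¹ * g (τ / σ t) : ℝ) : ℂ)
        * Complex.exp (-(2 * (π:ℂ) * η * τ) * Complex.I)) := by
    intro k hk η
    obtain ⟨C, hC⟩ := hAbdd k hk
    exact comp_integrable (A k) (φ k) ((hAreg k hk).continuous) (hφreg k hk).continuous
      hC g hgint hσt t η
  -- Step A : split the STFT into components
  have hsplitV : ∀ η : ℝ, aSTFT x g σ t η = ∑ k ∈ Finset.range (K + 1),
      ∫ τ : ℝ, ((A k (t + τ) : ℂ) * Complex.exp ((2 * (π:ℂ) * (φ k (t + τ))) * Complex.I))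
        * (((σ t)⁻¹ * g (τ / σ t) : ℝ) : ℂ)
        * Complex.exp (-(2 * (π:ℂ) * η * τ) * Complex.I) := by
    intro η
    unfold aSTFT
    rw [← integral_finset_sum _ (fun k hk => hint k (by
      have := Finset.mem_range.mp hk; omega) η)]
    refine integral_congr_ae (Filter.Eventually.of_forall fun τ => ?_)
    show x (t + τ) * (((σ t)⁻¹ * g (τ / σ t) : ℝ) : ℂ) *
        Complex.exp (-(2 * (π : ℂ) * η * τ) * Complex.I) = _
    rw [hx (t + τ), Finset.sum_mul, Finset.sum_mul]
    rfl
  -- the limiting "pure tone" terms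
  set Gf : ℕ → ℝ → ℂ := fun k η => (A k t : ℂ) *
      Complex.exp ((2 * (π:ℂ) * (φ k t)) * Complex.I) *
      hatg g (σ t * (η - deriv (φ k) t)) with hGf
  -- Step B : approximation of the STFT by the pure tones
  have happrox : ∀ η : ℝ, ‖aSTFT x g σ t η - ∑ k ∈ Finset.range (K + 1), Gf k η‖
      ≤ Msum K A t * lam0 g σ ε1 ε2 t := by
    intro η
    rw [hsplitV η, ← Finset.sum_sub_distrib]
    refine (norm_sum_le _ _).trans ?_
    have hMl : Msum K A t * lam0 g σ ε1 ε2 t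
        = ∑ k ∈ Finset.range (K + 1), A k t * lam0 g σ ε1 ε2 t := by
      rw [Msum, Finset.sum_mul]
    rw [hMl]
    refine Finset.sum_le_sum fun k hk => ?_
    have hkK : k ≤ K := by have := Finset.mem_range.mp hk; omega
    obtain ⟨C, hC⟩ := hAbdd k hkK
    have := comp_est (A k) (φ k) hε2.le ((hAreg k hkK).continuous) hC (hφreg k hkK)
      (hAlip k hkK) (hApos k hkK) (hdd k hkK) g hgint hgI1 hgI2 hσt t η
    rw [hGf]
    simp only
    unfold lam0
    exact this
  -- norm of pure tone terms
  have hGnorm : ∀ k, k ≤ K → ∀ η : ℝ,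
      ‖Gf k η‖ = A k t * ‖hatg g (σ t * (η - deriv (φ k) t))‖ := by
    intro k hk η
    rw [hGf]
    simp only
    rw [norm_mul, norm_mul, phase1, norm_exp_phase, mul_one, Complex.norm_real,
      Real.norm_eq_abs, abs_of_pos (hApos k hk t)]
  -- Step D : separation of the frequencies
  have hstep : ∀ j, 1 ≤ j → j ≤ K →
      2 * α / σ t ≤ deriv (φ j) t - deriv (φ (j - 1)) t := by
    intro j hj1 hjK
    have hd : 0 < deriv (φ j) t - deriv (φ (j - 1)) t := by
      rcases Nat.lt_or_ge j 2 with h2 | h2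
      · have hj : j = 1 := by omega
        subst hj
        obtain ⟨c, hc, hcall⟩ := hφ'pos 1 le_rfl hjK
        have := hcall t
        simp only [Nat.sub_self, dφ0]
        linarith
      · obtain ⟨d, hd0, hdall⟩ := hfreq
        have := hdall j h2 hjK t
        linarith
    have h1 := hsep t j hj1 hjK
    rw [div_le_iff₀ hd] at h1
    rw [div_le_iff₀ hσt]
    nlinarith
  have hmono : ∀ n, n ≤ K → ∀ m, m < n →
      2 * α / σ t * ((n : ℝ) - (m : ℝ)) ≤ deriv (φ n) t - deriv (φ m) t := by
    intro n
    induction n with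
    | zero => intro _ m hm; omega
    | succ n ih =>
      intro hnK m hm
      rcases Nat.lt_or_ge m n with hmn | hmn
      · have h1 := ih (by omega) m hmn
        have h2 := hstep (n + 1) (by omega) hnK
        simp only [Nat.add_sub_cancel] at h2
        push_cast
        push_cast at h1
        nlinarith [div_nonneg (by linarith [hα] : (0:ℝ) ≤ 2 * α) hσt.le]
      · have hmn' : m = n := by omega
        subst hmn'
        have h2 := hstep (m + 1) (by omega) hnK
        simp only [Nat.add_sub_cancel] at h2
        push_cast
        nlinarith
  have hgapkl : ∀ k, k ≤ K → k ≠ l →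
      2 * α / σ t * |(l : ℝ) - (k : ℝ)| ≤ |deriv (φ l) t - deriv (φ k) t| := by
    intro k hk hkl
    have hαν : (0:ℝ) ≤ 2 * α / σ t := div_nonneg (by linarith) hσt.le
    rcases Nat.lt_or_ge k l with h | h
    · have h1 := hmono l hl k h
      have hcast : (0:ℝ) ≤ (l : ℝ) - (k : ℝ) := by
        have : (k:ℝ) < l := by exact_mod_cast h
        linarith
      rw [abs_of_nonneg hcast, abs_of_nonneg (by nlinarith)]
      exact h1
    · have hlk : l < k := by omega
      have h1 := hmono k hk l hlk
      have hcast : (l : ℝ) - (k : ℝ) ≤ 0 := by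
        have : (l:ℝ) < k := by exact_mod_cast hlk
        linarith
      rw [abs_of_nonpos hcast, abs_of_nonpos (by nlinarith)]
      push_cast
      linarith
  -- Step E : cross terms
  have hdist1 : ∀ k, k ≠ l → (1:ℝ) ≤ |(l : ℝ) - (k : ℝ)| := by
    intro k hkl
    rcases Nat.lt_or_ge k l with h | h
    · have : (k:ℝ) + 1 ≤ l := by exact_mod_cast h
      rw [abs_of_nonneg (by linarith)]; linarith
    · have hlk : l < k := by omega
      have : (l:ℝ) + 1 ≤ k := by exact_mod_cast hlk
      rw [abs_of_nonpos (by linarith)]; linarith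
  have hcross : ∀ η : ℝ, |η - deriv (φ l) t| ≤ α / σ t →
      ∀ k ∈ (Finset.range (K + 1)).erase l,
      ‖hatg g (σ t * (η - deriv (φ k) t))‖
        ≤ ‖hatg g (α * (2 * |(l : ℝ) - (k : ℝ)| - 1))‖ := by
    intro η hη k hkmem
    have hkl : k ≠ l := Finset.ne_of_mem_erase hkmem
    have hkK : k ≤ K := by
      have := Finset.mem_range.mp (Finset.mem_of_mem_erase hkmem); omega
    have hd1 := hdist1 k hkl
    have hc0 : 0 ≤ α * (2 * |(l : ℝ) - (k : ℝ)| - 1) := by nlinarith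
    refine hatg_norm_anti g hgeven hgdec hc0 ?_
    have hgap := hgapkl k hkK hkl
    have htri : |deriv (φ l) t - deriv (φ k) t| - |η - deriv (φ l) t| ≤ |η - deriv (φ k) t| := by
      have := abs_sub_abs_le_abs_sub (deriv (φ l) t - deriv (φ k) t) (deriv (φ l) t - η)
      have h2 : |deriv (φ l) t - η| = |η - deriv (φ l) t| := abs_sub_comm _ _
      have h3 : |deriv (φ l) t - deriv (φ k) t - (deriv (φ l) t - η)| = |η - deriv (φ k) t| := by
        congr 1; ring
      linarith [abs_sub_abs_le_abs_sub (deriv (φ l) t - deriv (φ k) t) (deriv (φ l) t - η),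
        h3 ▸ (abs_sub_abs_le_abs_sub (deriv (φ l) t - deriv (φ k) t) (deriv (φ l) t - η))]
    have hsabs : |σ t * (η - deriv (φ k) t)| = σ t * |η - deriv (φ k) t| := by
      rw [abs_mul, abs_of_pos hσt]
    rw [hsabs]
    have hη' : σ t * |η - deriv (φ l) t| ≤ α := by
      have := mul_le_mul_of_nonneg_left hη hσt.le
      rwa [mul_div_cancel₀ _ hσt.ne'] at this
    have hgap' : 2 * α * |(l : ℝ) - (k : ℝ)| ≤ σ t * |deriv (φ l) t - deriv (φ k) t| := by
      have := mul_le_mul_of_nonneg_left hgap hσt.le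
      calc 2 * α * |(l : ℝ) - (k : ℝ)| = σ t * (2 * α / σ t * |(l : ℝ) - (k : ℝ)|) := by
            field_simp
        _ ≤ σ t * |deriv (φ l) t - deriv (φ k) t| := this
    have h5 : σ t * (|deriv (φ l) t - deriv (φ k) t| - |η - deriv (φ l) t|)
        ≤ σ t * |η - deriv (φ k) t| := mul_le_mul_of_nonneg_left htri hσt.le
    nlinarith
  -- Step F : upper bound
  have hupper : ∀ η : ℝ, |η - deriv (φ l) t| ≤ α / σ t →
      ‖aSTFT x g σ t η‖ ≤ A l t + errl K A g σ α ε1 ε2 l t := by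
    intro η hη
    have h1 : ‖aSTFT x g σ t η‖ ≤ ‖aSTFT x g σ t η - ∑ k ∈ Finset.range (K + 1), Gf k η‖
        + ‖∑ k ∈ Finset.range (K + 1), Gf k η‖ := by
      have := norm_add_le (aSTFT x g σ t η - ∑ k ∈ Finset.range (K + 1), Gf k η)
        (∑ k ∈ Finset.range (K + 1), Gf k η)
      simpa using this
    have h2 : ‖∑ k ∈ Finset.range (K + 1), Gf k η‖
        ≤ A l t + ∑ k ∈ (Finset.range (K + 1)).erase l,
            A k t * ‖hatg g (α * (2 * |(l : ℝ) - (k : ℝ)| - 1))‖ := by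
      refine (norm_sum_le _ _).trans ?_
      rw [← Finset.add_sum_erase _ _ hlmem]
      refine add_le_add ?_ (Finset.sum_le_sum ?_)
      · rw [hGnorm l hl η]
        have := hatg_norm_le_one g hgnorm hgeven hgdec (σ t * (η - deriv (φ l) t))
        nlinarith [(hApos l hl t)]
      · intro k hkmem
        have hkK : k ≤ K := by
          have := Finset.mem_range.mp (Finset.mem_of_mem_erase hkmem); omega
        rw [hGnorm k hkK η]
        exact mul_le_mul_of_nonneg_left (hcross η hη k hkmem) (hApos k hkK t).le
    have h3 := happrox η
    unfold errl
    linarith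
  -- Step G : lower bound at the reference frequency
  set ηstar := deriv (φ l) t with hηstar
  have hη0star : |ηstar - deriv (φ l) t| = 0 := by simp [hηstar]
  have hlower : A l t - errl K A g σ α ε1 ε2 l t ≤ ‖aSTFT x g σ t ηstar‖ := by
    have hGl : ‖Gf l ηstar‖ = A l t := by
      rw [hGnorm l hl ηstar]
      have : σ t * (ηstar - deriv (φ l) t) = 0 := by simp [hηstar]
      rw [this, hatg_zero g hgnorm, norm_one, mul_one]
    have h2 : ‖∑ k ∈ Finset.range (K + 1), Gf k ηstar‖
        ≥ A l t - ∑ k ∈ (Finset.range (K + 1)).erase l,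
            A k t * ‖hatg g (α * (2 * |(l : ℝ) - (k : ℝ)| - 1))‖ := by
      rw [← Finset.add_sum_erase _ _ hlmem]
      have htr : ‖Gf l ηstar‖ - ‖∑ k ∈ (Finset.range (K + 1)).erase l, Gf k ηstar‖
          ≤ ‖Gf l ηstar + ∑ k ∈ (Finset.range (K + 1)).erase l, Gf k ηstar‖ := by
        have h := norm_sub_le (Gf l ηstar + ∑ k ∈ (Finset.range (K + 1)).erase l, Gf k ηstar)
          (∑ k ∈ (Finset.range (K + 1)).erase l, Gf k ηstar)
        rw [add_sub_cancel_right] at h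
        linarith
      have hsum : ‖∑ k ∈ (Finset.range (K + 1)).erase l, Gf k ηstar‖
          ≤ ∑ k ∈ (Finset.range (K + 1)).erase l,
              A k t * ‖hatg g (α * (2 * |(l : ℝ) - (k : ℝ)| - 1))‖ := by
        refine (norm_sum_le _ _).trans (Finset.sum_le_sum fun k hkmem => ?_)
        have hkK : k ≤ K := by
          have := Finset.mem_range.mp (Finset.mem_of_mem_erase hkmem); omega
        rw [hGnorm k hkK ηstar]
        exact mul_le_mul_of_nonneg_left
          (hcross ηstar (by rw [hη0star]; positivity) k hkmem) (hApos k hkK t).le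
      rw [hGl] at htr
      linarith
    have h3 := happrox ηstar
    have h4 : ‖∑ k ∈ Finset.range (K + 1), Gf k ηstar‖ - ‖aSTFT x g σ t ηstar
        - ∑ k ∈ Finset.range (K + 1), Gf k ηstar‖ ≤ ‖aSTFT x g σ t ηstar‖ := by
      have hh := norm_sub_le (aSTFT x g σ t ηstar)
        (aSTFT x g σ t ηstar - ∑ k ∈ Finset.range (K + 1), Gf k ηstar)
      have heq : aSTFT x g σ t ηstar - (aSTFT x g σ t ηstar
          - ∑ k ∈ Finset.range (K + 1), Gf k ηstar) = ∑ k ∈ Finset.range (K + 1), Gf k ηstar := by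
        ring
      rw [heq] at hh
      linarith
    unfold errl
    linarith
  -- Step H : bound on the error term
  have herr_le : errl K A g σ α ε1 ε2 l t
      ≤ Msum K A t * (lam0 g σ ε1 ε2 t + τ0) - τ0 * A l t := by
    have hsumA : ∑ k ∈ (Finset.range (K + 1)).erase l, A k t = Msum K A t - A l t := by
      rw [Msum, ← Finset.add_sum_erase _ _ hlmem]
      ring
    have hterm : ∀ k ∈ (Finset.range (K + 1)).erase l,
        A k t * ‖hatg g (α * (2 * |(l : ℝ) - (k : ℝ)| - 1))‖ ≤ A k t * τ0 := by
      intro k hkmem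
      have hkK : k ≤ K := by
        have := Finset.mem_range.mp (Finset.mem_of_mem_erase hkmem); omega
      have hkl : k ≠ l := Finset.ne_of_mem_erase hkmem
      have hd1 := hdist1 k hkl
      have : ‖hatg g (α * (2 * |(l : ℝ) - (k : ℝ)| - 1))‖ ≤ ‖hatg g α‖ := by
        apply hgdec α _ hα.le
        nlinarith
      rw [hgα] at this
      exact mul_le_mul_of_nonneg_left this (hApos k hkK t).le
    have hsum := Finset.sum_le_sum hterm
    rw [← Finset.sum_mul, hsumA] at hsum
    unfold errl
    nlinarith
  have hmu_le : muMin K A t ≤ A l t := Finset.inf'_le _ hlmem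
  -- Step I : conclusion
  rcases Nat.eq_zero_or_pos l with rfl | hl1
  · -- l = 0 : the estimate holds at η = 0 = φ'_0(t)
    have h0 : ηstar = 0 := by rw [hηstar, dφ0]
    rw [hη0, ← h0]
    rw [abs_le]
    constructor
    · have := hlower
      linarith
    · have := hupper ηstar (by rw [hη0star]; positivity)
      linarith
  · -- 1 ≤ l : use the argmax property
    have hmemstar : ηstar ∈ Gtk x g σ φ α t epst l := by
      constructor
      · show epst < ‖aSTFT x g σ t ηstar‖
        have h1 : epst + τ0 * A l t ≤ A l t - errl K A g σ α ε1 ε2 l t := by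
          have := herr_le
          nlinarith [hmu_le, heps2]
        have h2 : 0 < τ0 * A l t := mul_pos hτ0 (hApos l hl t)
        linarith [hlower]
      · show |ηstar - deriv (φ l) t| < α / σ t
        rw [hη0star]
        positivity
    have hmax := hηmax l hl1 hl ηstar hmemstar
    have hmem := hηmem l hl1 hl
    have hupb := hupper (ηhat l) (le_of_lt hmem.2)
    rw [abs_le]
    constructor
    · linarith [hlower]
    · linarith
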